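/- Let G be a connected graph of diameter at most d with n < k vertices. Then for any two (d,k)-colorings α, β of G, there exists a sequence of (d,k)-colorings from α to β in which consecutive colorings differ at exactly one vertex. -/
import Mathlib


/-- A (d,k)-coloring: distinct vertices at distance at most d (and reachable)
receive different colors. -/
def IsDKColoring {V : Type*} (G : SimpleGraph V) (d k : ℕ) (α : V → Fin k) : Prop :=
  ∀ u v : V, u ≠ v → G.Reachable u v → G.dist u v ≤ d → α u ≠ α v

/-- Two colorings differ at exactly one vertex. -/
def OneStep {V : Type*} {k : ℕ} (α β : V → Fin k) : Prop :=
  ∃ v : V, α v ≠ β v ∧ ∀ w : V, w ≠ v → α w = β w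

section Aux

variable {V : Type*} {k : ℕ}

lemma update_inj [DecidableEq V] {α : V → Fin k} (hα : Function.Injective α) (v : V) (c : Fin k)
    (hc : ∀ x, x ≠ v → α x ≠ c) : Function.Injective (Function.update α v c) := by
  intro x y h
  by_cases hx : x = v <;> by_cases hy : y = v <;>
    simp [Function.update_apply, hx, hy] at h ⊢
  · exact absurd h.symm (hc y hy)
  · exact absurd h (hc x hx)
  · exact hα h

lemma prepend {P : (V → Fin k) → Prop} {α α' β : V → Fin k} (hα : P α) (hstep : OneStep α α')
    (h : ∃ (m : ℕ) (seq : ℕ → V → Fin k), seq 0 = α' ∧ seq m = β ∧ (∀ i ≤ m, P (seq i)) ∧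
      (∀ i < m, OneStep (seq i) (seq (i + 1)))) :
    ∃ (m : ℕ) (seq : ℕ → V → Fin k), seq 0 = α ∧ seq m = β ∧ (∀ i ≤ m, P (seq i)) ∧
      (∀ i < m, OneStep (seq i) (seq (i + 1))) := by
  obtain ⟨m, seq, h0, hm, hP, hS⟩ := h
  refine ⟨m + 1, fun i => match i with | 0 => α | (i+1) => seq i, rfl, hm, ?_, ?_⟩
  · rintro (_ | i) hi
    · exact hα
    · exact hP i (Nat.succ_le_succ_iff.mp hi)
  · rintro (_ | i) hi
    · simpa [h0] using hstep
    · exact hS i (Nat.succ_lt_succ_iff.mp hi)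

lemma core [Fintype V] [DecidableEq V] (hcard : Fintype.card V < k) (β : V → Fin k)
    (hβ : Function.Injective β) :
    ∀ n (α : V → Fin k), Function.Injective α →
      (Finset.univ.filter (fun v => α v ≠ β v)).card ≤ n →
      ∃ (m : ℕ) (seq : ℕ → V → Fin k), seq 0 = α ∧ seq m = β ∧ (∀ i ≤ m, Function.Injective (seq i)) ∧
        (∀ i < m, OneStep (seq i) (seq (i + 1))) := by
  intro n
  induction n with
  | zero =>
    intro α hα hc
    have : α = β := by
      funext x
      by_contra hx
      have : x ∈ Finset.univ.filter (fun v => α v ≠ β v) := by simp [hx]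
      simpa using Finset.card_pos.mpr ⟨x, this⟩ |>.trans_le hc
    exact ⟨0, fun _ => β, by rw [this], rfl, fun i _ => hβ, fun i hi => absurd hi (by omega)⟩
  | succ n ih =>
    intro α hα hc
    by_cases hEq : α = β
    · exact ⟨0, fun _ => β, by rw [hEq], rfl, fun i _ => hβ, fun i hi => absurd hi (by omega)⟩
    · obtain ⟨v, hv⟩ := Function.ne_iff.mp hEq
      have hvmem : v ∈ Finset.univ.filter (fun x => α x ≠ β x) := by simp [hv]
      have herase : ((Finset.univ.filter (fun x => α x ≠ β x)).erase v).card ≤ n := by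
        rw [Finset.card_erase_of_mem hvmem]; omega
      by_cases hw : ∃ w, α w = β v
      · -- some vertex uses color β v; move it to a fresh color first
        obtain ⟨w, hwv⟩ := hw
        have hwne : w ≠ v := fun h => hv (h ▸ hwv)
        -- fresh color c not in range of α
        have hfresh : ∃ c : Fin k, ∀ x, α x ≠ c := by
          by_contra h
          push_neg at h
          have hsub : (Finset.univ : Finset (Fin k)) ⊆ Finset.univ.image α := by
            intro c _
            obtain ⟨x, hx⟩ := h c
            exact Finset.mem_image.mpr ⟨x, Finset.mem_univ x, hx⟩
          have := Finset.card_le_card hsub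
          have h2 := Finset.card_image_le (s := (Finset.univ : Finset V)) (f := α)
          simp [Finset.card_univ] at this h2
          omega
        obtain ⟨c, hcfresh⟩ := hfresh
        set α1 := Function.update α w c with hα1
        set α2 := Function.update α1 v (β v) with hα2
        have hα1inj : Function.Injective α1 := update_inj hα w c (fun x _ => hcfresh x)
        have hα2inj : Function.Injective α2 := by
          refine update_inj hα1inj v (β v) (fun x hx => ?_)
          by_cases hxw : x = w
          · rw [hxw, hα1, Function.update_self]
            exact fun h => hcfresh w (hwv.trans h.symm)
          · rw [hα1, Function.update_of_ne hxw]
            intro h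
            exact hxw (hα (h.trans hwv.symm))
        have hsubset : Finset.univ.filter (fun x => α2 x ≠ β x) ⊆
            (Finset.univ.filter (fun x => α x ≠ β x)).erase v := by
          intro x hx
          simp only [Finset.mem_filter, Finset.mem_univ, true_and] at hx
          have hxv : x ≠ v := by
            intro h; subst h
            exact hx (by simp [hα2])
          refine Finset.mem_erase.mpr ⟨hxv, ?_⟩
          simp only [Finset.mem_filter, Finset.mem_univ, true_and]
          by_cases hxw : x = w
          · subst hxw
            intro h
            exact (Ne.symm hxv) (hβ (hwv.symm.trans h))
          · intro h
            apply hx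
            rw [hα2, Function.update_of_ne hxv, hα1, Function.update_of_ne hxw, h]
        have hc2 : (Finset.univ.filter (fun x => α2 x ≠ β x)).card ≤ n :=
          le_trans (Finset.card_le_card hsubset) herase
        have step1 : OneStep α α1 := ⟨w, fun h => hcfresh w (by simpa [hα1] using h), fun x hx => by
          rw [hα1, Function.update_of_ne hx]⟩
        have step2 : OneStep α1 α2 := ⟨v, by
          rw [hα1, Function.update_of_ne hwne.symm, hα2, Function.update_self]; exact hv,
          fun x hx => by rw [hα2, Function.update_of_ne hx]⟩
        exact prepend hα step1 (prepend hα1inj step2 (ih α2 hα2inj hc2))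
      · -- no vertex uses β v: recolor v directly
        push_neg at hw
        set α' := Function.update α v (β v) with hα'
        have hα'inj : Function.Injective α' := update_inj hα v (β v) (fun x _ => hw x)
        have hsubset : Finset.univ.filter (fun x => α' x ≠ β x) ⊆
            (Finset.univ.filter (fun x => α x ≠ β x)).erase v := by
          intro x hx
          simp only [Finset.mem_filter, Finset.mem_univ, true_and] at hx
          have hxv : x ≠ v := by
            intro h; subst h; exact hx (by simp [hα'])
          refine Finset.mem_erase.mpr ⟨hxv, by
            simp only [Finset.mem_filter, Finset.mem_univ, true_and]
            rwa [hα', Function.update_of_ne hxv] at hx⟩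
        have hc' : (Finset.univ.filter (fun x => α' x ≠ β x)).card ≤ n :=
          le_trans (Finset.card_le_card hsubset) herase
        have step : OneStep α α' := ⟨v, by rw [hα', Function.update_self]; exact hv,
          fun x hx => by rw [hα', Function.update_of_ne hx]⟩
        exact prepend hα step (ih α' hα'inj hc')

end Aux

theorem reconf_when_card_lt_k {V : Type*} [Fintype V] (G : SimpleGraph V) (d k : ℕ)
    (hconn : G.Connected) (hdiam : ∀ u v : V, G.dist u v ≤ d)
    (hcard : Fintype.card V < k)
    (α β : V → Fin k) (hα : IsDKColoring G d k α) (hβ : IsDKColoring G d k β) :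
    ∃ (m : ℕ) (seq : ℕ → V → Fin k),
      seq 0 = α ∧ seq m = β ∧
      (∀ i ≤ m, IsDKColoring G d k (seq i)) ∧
      (∀ i < m, OneStep (seq i) (seq (i + 1))) := by
  classical
  have inj_iff : ∀ γ : V → Fin k, IsDKColoring G d k γ ↔ Function.Injective γ := by
    intro γ
    constructor
    · intro h x y hxy
      by_contra hne
      exact h x y hne (hconn.preconnected x y) (hdiam x y) hxy
    · intro h u v huv _ _ hc
      exact huv (h hc)
  obtain ⟨m, seq, h0, hm, hP, hS⟩ :=
    core hcard β ((inj_iff β).mp hβ)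
      ((Finset.univ.filter (fun v => α v ≠ β v)).card) α ((inj_iff α).mp hα) le_rfl
  exact ⟨m, seq, h0, hm, fun i hi => (inj_iff _).mpr (hP i hi), hS⟩
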